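/- Let P and Q be orthogonal projections on a Hilbert space H such that Q - P is compact. Then the operator T = QP, viewed as a map from im(P) to im(Q), is Fredholm. -/

import Mathlib

open ContinuousLinearMap

/-- A bounded operator is Fredholm if its kernel is finite dimensional and its
cokernel is finite dimensional. -/
def IsFredholmOp {E F : Type*} [NormedAddCommGroup E] [NormedSpace ℂ E]
    [NormedAddCommGroup F] [NormedSpace ℂ F] (T : E →L[ℂ] F) : Prop :=
  FiniteDimensional ℂ (LinearMap.ker (T : E →ₗ[ℂ] F)) ∧ FiniteDimensional ℂ (F ⧸ LinearMap.range (T : E →ₗ[ℂ] F))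

/-- The operator `Q P` viewed as a map from `im P` to `im Q`. -/
noncomputable def relOp {H : Type*} [NormedAddCommGroup H] [InnerProductSpace ℂ H]
    [CompleteSpace H] (P Q : H →L[ℂ] H) :
    ↥(LinearMap.range (P : H →ₗ[ℂ] H)) →L[ℂ] ↥(LinearMap.range (Q : H →ₗ[ℂ] H)) :=
  (Q.comp (LinearMap.range (P : H →ₗ[ℂ] H)).subtypeL).codRestrict (LinearMap.range (Q : H →ₗ[ℂ] H))
    (fun x => LinearMap.mem_range_self (Q : H →ₗ[ℂ] H) _)

open Filter Topology

set_option linter.unusedSectionVars false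
set_option maxHeartbeats 2000000
set_option synthInstance.maxHeartbeats 400000

section Aux
variable {H : Type*} [NormedAddCommGroup H] [InnerProductSpace ℂ H] [CompleteSpace H]

lemma fix_of_idem (P : H →L[ℂ] H) (h : P.comp P = P) :
    ∀ x ∈ LinearMap.range (P : H →ₗ[ℂ] H), P x = x := by
  rintro x ⟨y, rfl⟩
  exact ContinuousLinearMap.ext_iff.mp h y

lemma isClosed_range_of_idem (P : H →L[ℂ] H) (h : P.comp P = P) :
    IsClosed ((LinearMap.range (P : H →ₗ[ℂ] H) : Submodule ℂ H) : Set H) := by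
  have : ((LinearMap.range (P : H →ₗ[ℂ] H) : Submodule ℂ H) : Set H)
      = ((LinearMap.ker ((1 - P : H →L[ℂ] H) : H →ₗ[ℂ] H) : Submodule ℂ H) : Set H) := by
    ext x
    simp only [SetLike.mem_coe, LinearMap.mem_ker, ContinuousLinearMap.coe_coe, ContinuousLinearMap.coe_sub',
      Pi.sub_apply, ContinuousLinearMap.one_apply, sub_eq_zero]
    constructor
    · intro hx; exact (fix_of_idem P h x hx).symm
    · intro hx; exact ⟨x, hx.symm⟩
  rw [this]
  exact isClosed_ker _

lemma finiteDimensional_of_compact_fix (C : H →L[ℂ] H) (hC : IsCompactOperator ⇑C)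
    (V : Submodule ℂ H) (hV : IsClosed (V : Set H)) (hfix : ∀ v ∈ V, C v = v) :
    FiniteDimensional ℂ V := by
  obtain ⟨K, hK, hKs⟩ := hC.image_closedBall_subset_compact 1
  apply FiniteDimensional.of_isCompact_closedBall₀ ℂ (r := 1) one_pos
  have hsub : Metric.closedBall (0 : V) 1 ⊆ Subtype.val ⁻¹' K := by
    intro v hv
    have hvn : ‖(v : H)‖ ≤ 1 := by
      simpa [Metric.mem_closedBall, dist_zero_right] using hv
    have : C (v : H) ∈ K := hKs ⟨(v : H), by simpa [Metric.mem_closedBall, dist_zero_right], rfl⟩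
    simpa [hfix _ v.2] using this
  exact (hV.isClosedEmbedding_subtypeVal.isCompact_preimage hK).of_isClosed_subset
    Metric.isClosed_closedBall hsub

end Aux

/-- If `P`, `Q` are orthogonal projections on a Hilbert space with `Q - P` compact, then
`T = QP : im P → im Q` is Fredholm. -/
theorem relOp_fredholm {H : Type*} [NormedAddCommGroup H] [InnerProductSpace ℂ H]
    [CompleteSpace H] (P Q : H →L[ℂ] H)
    (hPsa : IsSelfAdjoint P) (hPidem : P.comp P = P)
    (hQsa : IsSelfAdjoint Q) (hQidem : Q.comp Q = Q)
    (hcomp : IsCompactOperator ⇑(Q - P)) :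
    IsFredholmOp (relOp P Q) := by

  have hPfix := fix_of_idem P hPidem
  have hQfix := fix_of_idem Q hQidem
  have hEc := isClosed_range_of_idem P hPidem
  have hFc := isClosed_range_of_idem Q hQidem
  haveI : CompleteSpace (LinearMap.range (P : H →ₗ[ℂ] H)) := hEc.completeSpace_coe
  haveI : CompleteSpace (LinearMap.range (Q : H →ₗ[ℂ] H)) := hFc.completeSpace_coe
  set T := relOp P Q with hT
  have hTapp : ∀ x : ↥(LinearMap.range (P : H →ₗ[ℂ] H)), ((T x : H)) = Q x := fun x => rfl
  -- kernel finite dimensional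
  have hVfin : FiniteDimensional ℂ (LinearMap.range (P : H →ₗ[ℂ] H) ⊓ LinearMap.ker (Q : H →ₗ[ℂ] H) : Submodule ℂ H) := by
    apply finiteDimensional_of_compact_fix (P - Q) (by simpa using hcomp.neg)
    · exact hEc.inter (isClosed_ker Q)
    · intro v hv
      obtain ⟨hv1, hv2⟩ := Submodule.mem_inf.mp hv
      simp [ContinuousLinearMap.sub_apply, hPfix v hv1, (show Q v = 0 from LinearMap.mem_ker.mp hv2)]
  have hker : FiniteDimensional ℂ (LinearMap.ker (T.toLinearMap)) := by
    let f : (LinearMap.ker (T.toLinearMap)) →ₗ[ℂ] ↥(LinearMap.range (P : H →ₗ[ℂ] H) ⊓ LinearMap.ker (Q : H →ₗ[ℂ] H) : Submodule ℂ H) :=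
      { toFun := fun x => ⟨((x : ↥(LinearMap.range (P : H →ₗ[ℂ] H))) : H), Submodule.mem_inf.mpr
          ⟨(x : ↥(LinearMap.range (P : H →ₗ[ℂ] H))).2, LinearMap.mem_ker.mpr (by
            have h0 : T (x : ↥(LinearMap.range (P : H →ₗ[ℂ] H))) = 0 := x.2
            have h1 : ((T (x : ↥(LinearMap.range (P : H →ₗ[ℂ] H))) : H)) = 0 := by rw [h0]; rfl
            rw [ContinuousLinearMap.coe_coe, ← hTapp]; exact h1)⟩⟩
        map_add' := fun x y => rfl
        map_smul' := fun c x => rfl }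
    have hinj : Function.Injective f := by
      intro x y hxy
      have h2 : ((f x : H)) = ((f y : H)) := congrArg Subtype.val hxy
      exact Subtype.ext (Subtype.ext h2)
    exact FiniteDimensional.of_injective f hinj
  -- orthogonal decomposition of the domain along the kernel
  set N := LinearMap.ker (T.toLinearMap) with hN
  haveI : FiniteDimensional ℂ ↥N := hker
  haveI : CompleteSpace ↥N := FiniteDimensional.complete ℂ ↥N
  let Tr : ↥(Nᗮ) →L[ℂ] ↥(LinearMap.range (Q : H →ₗ[ℂ] H)) := T.comp (Nᗮ).subtypeL
  -- T is bounded below on the orthogonal complement of its kernel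
  have hbb : ∃ c : NNReal, ∀ w : ↥(Nᗮ), ‖w‖ ≤ (c : ℝ) * ‖Tr w‖ := by
    by_contra hcon
    push_neg at hcon
    choose w hw using fun n : ℕ => hcon (n + 1)
    have hwpos : ∀ n, 0 < ‖w n‖ := by
      intro n
      rcases (norm_nonneg (w n)).lt_or_eq with h | h
      · exact h
      · exfalso
        have := hw n
        rw [← h] at this
        nlinarith [norm_nonneg (Tr (w n)),
          mul_nonneg (NNReal.coe_nonneg ((n : NNReal) + 1)) (norm_nonneg (Tr (w n)))]
    let u : ℕ → ↥(Nᗮ) := fun n => ((‖w n‖ : ℂ))⁻¹ • w n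
    have hu1 : ∀ n, ‖u n‖ = 1 := by
      intro n
      simp only [u, norm_smul, norm_inv, Complex.norm_real, Real.norm_eq_abs,
        abs_of_pos (hwpos n)]
      exact inv_mul_cancel₀ (hwpos n).ne'
    have hTu : Tendsto (fun n => ‖Tr (u n)‖) atTop (𝓝 0) := by
      have hle : ∀ n, ‖Tr (u n)‖ ≤ 1 / ((n : ℝ) + 1) := by
        intro n
        have hmap : Tr (u n) = ((‖w n‖ : ℂ))⁻¹ • Tr (w n) := by simp [u, map_smul]
        rw [hmap, norm_smul, norm_inv, Complex.norm_real, Real.norm_eq_abs,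
          abs_of_pos (hwpos n)]
        have hwn := (hw n).le
        have hcast : (((n : NNReal) + 1 : NNReal) : ℝ) = (n : ℝ) + 1 := by push_cast; ring
        rw [hcast] at hwn
        have hn1 : (0 : ℝ) < (n : ℝ) + 1 := by positivity
        rw [inv_mul_le_iff₀ (hwpos n), mul_one_div, le_div_iff₀ hn1]
        nlinarith [hwn]
      exact squeeze_zero (fun n => norm_nonneg _) hle tendsto_one_div_add_atTop_nhds_zero_nat
    let v : ℕ → H := fun n => (((u n : ↥(LinearMap.range (P : H →ₗ[ℂ] H)))) : H)
    have hv1 : ∀ n, ‖v n‖ = 1 := fun n => hu1 n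
    have hQv : Tendsto (fun n => Q (v n)) atTop (𝓝 0) := by
      rw [tendsto_zero_iff_norm_tendsto_zero]
      have heq : ∀ n, ‖Q (v n)‖ = ‖Tr (u n)‖ := fun n => rfl
      simpa [heq] using hTu
    obtain ⟨K, hK, hKs⟩ := hcomp.image_closedBall_subset_compact 1
    have hmemK : ∀ n, (Q - P) (v n) ∈ K := fun n =>
      hKs ⟨v n, by simp [Metric.mem_closedBall, dist_zero_right, hv1 n], rfl⟩
    obtain ⟨y, -, φ, hφ, hy⟩ := hK.tendsto_subseq hmemK
    have hvE : ∀ n, v n ∈ LinearMap.range (P : H →ₗ[ℂ] H) := fun n => ((u n : ↥(LinearMap.range (P : H →ₗ[ℂ] H)))).2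
    have hrep : ∀ n, v n = P (Q (v n)) - P ((Q - P) (v n)) := by
      intro n
      have h1 : P (v n) = v n := hPfix _ (hvE n)
      have h2 : P (P (v n)) = P (v n) := ContinuousLinearMap.ext_iff.mp hPidem (v n)
      simp only [ContinuousLinearMap.sub_apply, map_sub, h2, h1]
      abel
    have hlim : Tendsto (fun n => v (φ n)) atTop (𝓝 (-(P y))) := by
      have hA : Tendsto (fun n => P (Q (v (φ n)))) atTop (𝓝 0) := by
        have := (P.continuous.tendsto 0).comp (hQv.comp hφ.tendsto_atTop)
        simpa [Function.comp_def] using this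
      have hB : Tendsto (fun n => P ((Q - P) (v (φ n)))) atTop (𝓝 (P y)) :=
        (P.continuous.tendsto y).comp hy
      have hAB := hA.sub hB
      rw [zero_sub] at hAB
      exact Tendsto.congr (fun n => (hrep (φ n)).symm) hAB
    have hzE : -(P y) ∈ LinearMap.range (P : H →ₗ[ℂ] H) := ⟨-y, by simp⟩
    let z : ↥(LinearMap.range (P : H →ₗ[ℂ] H)) := ⟨-(P y), hzE⟩
    have hulim : Tendsto (fun n => ((u (φ n)) : ↥(LinearMap.range (P : H →ₗ[ℂ] H)))) atTop (𝓝 z) := by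
      rw [Topology.IsEmbedding.subtypeVal.tendsto_nhds_iff]
      exact hlim
    have hzW : z ∈ Nᗮ :=
      N.isClosed_orthogonal.mem_of_tendsto hulim
        (Filter.Eventually.of_forall fun n => (u (φ n)).2)
    have hTz : T z = 0 := by
      have h1 : Tendsto (fun n => T ((u (φ n)) : ↥(LinearMap.range (P : H →ₗ[ℂ] H)))) atTop (𝓝 (T z)) :=
        (T.continuous.tendsto z).comp hulim
      have h2 : Tendsto (fun n => T ((u (φ n)) : ↥(LinearMap.range (P : H →ₗ[ℂ] H)))) atTop (𝓝 0) := by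
        rw [tendsto_zero_iff_norm_tendsto_zero]
        have heq : ∀ n, ‖T ((u (φ n)) : ↥(LinearMap.range (P : H →ₗ[ℂ] H)))‖ = ‖Tr (u (φ n))‖ :=
          fun n => rfl
        simpa [heq, Function.comp_def] using hTu.comp hφ.tendsto_atTop
      exact tendsto_nhds_unique h1 h2
    have hz0 : z = 0 := by
      have hmem : z ∈ N ⊓ Nᗮ := ⟨LinearMap.mem_ker.mpr hTz, hzW⟩
      rw [N.inf_orthogonal_eq_bot] at hmem
      simpa using hmem
    have hz1 : ‖z‖ = 1 := by
      have h1 : Tendsto (fun n => ‖((u (φ n)) : ↥(LinearMap.range (P : H →ₗ[ℂ] H)))‖) atTop (𝓝 ‖z‖) :=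
        hulim.norm
      have h2 : Tendsto (fun n => ‖((u (φ n)) : ↥(LinearMap.range (P : H →ₗ[ℂ] H)))‖) atTop (𝓝 1) := by
        have heq : ∀ n, ‖((u (φ n)) : ↥(LinearMap.range (P : H →ₗ[ℂ] H)))‖ = 1 := fun n => hu1 (φ n)
        simpa [heq] using (tendsto_const_nhds : Tendsto (fun _ : ℕ => (1:ℝ)) atTop (𝓝 1))
      exact tendsto_nhds_unique h1 h2
    rw [hz0] at hz1
    simp at hz1
  -- range of T is closed
  obtain ⟨c, hc⟩ := hbb
  have hanti : AntilipschitzWith c Tr := ContinuousLinearMap.antilipschitz_of_bound Tr hc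
  have hclosedRange : IsClosed (Set.range Tr) := hanti.isClosed_range Tr.uniformContinuous
  have hrangeEq : ((LinearMap.range (T.toLinearMap) : Submodule ℂ ↥(LinearMap.range (Q : H →ₗ[ℂ] H))) : Set _)
      = Set.range Tr := by
    apply Set.Subset.antisymm
    · rintro y ⟨x, rfl⟩
      have hx : x ∈ N ⊔ Nᗮ := by
        rw [Submodule.isCompl_orthogonal_of_hasOrthogonalProjection.sup_eq_top]
        trivial
      obtain ⟨n, hn, w, hwmem, rfl⟩ := Submodule.mem_sup.mp hx
      refine ⟨⟨w, hwmem⟩, ?_⟩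
      have hn0 : T n = 0 := hn
      show T ((Nᗮ).subtypeL ⟨w, hwmem⟩) = T (n + w)
      simp [map_add, hn0]
    · rintro _ ⟨w, rfl⟩
      exact ⟨(w : ↥(LinearMap.range (P : H →ₗ[ℂ] H))), rfl⟩
  have hRclosed : IsClosed ((LinearMap.range (T.toLinearMap) : Submodule ℂ ↥(LinearMap.range (Q : H →ₗ[ℂ] H))) : Set ↥(LinearMap.range (Q : H →ₗ[ℂ] H))) := by
    rw [hrangeEq]; exact hclosedRange
  haveI : CompleteSpace (LinearMap.range (T.toLinearMap)) := hRclosed.completeSpace_coe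
  -- the orthogonal complement of the range is finite dimensional
  have hV'fin : FiniteDimensional ℂ (LinearMap.range (Q : H →ₗ[ℂ] H) ⊓ LinearMap.ker (P : H →ₗ[ℂ] H) : Submodule ℂ H) := by
    apply finiteDimensional_of_compact_fix (Q - P) hcomp
    · exact hFc.inter (isClosed_ker P)
    · intro v hv
      obtain ⟨hv1, hv2⟩ := Submodule.mem_inf.mp hv
      simp [ContinuousLinearMap.sub_apply, hQfix v hv1, (show P v = 0 from LinearMap.mem_ker.mp hv2)]
  have hQsym : ∀ a b : H, (inner ℂ (Q a) b : ℂ) = inner ℂ a (Q b) := fun a b => by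
    nth_rewrite 1 [← hQsa.adjoint_eq]
    exact ContinuousLinearMap.adjoint_inner_left Q b a
  have hPsym : ∀ a b : H, (inner ℂ (P a) b : ℂ) = inner ℂ a (P b) := fun a b => by
    nth_rewrite 1 [← hPsa.adjoint_eq]
    exact ContinuousLinearMap.adjoint_inner_left P b a
  haveI horthfin : FiniteDimensional ℂ ↥((LinearMap.range (T.toLinearMap))ᗮ) := by
    let f : ↥((LinearMap.range (T.toLinearMap))ᗮ) →ₗ[ℂ]
        ↥(LinearMap.range (Q : H →ₗ[ℂ] H) ⊓ LinearMap.ker (P : H →ₗ[ℂ] H) : Submodule ℂ H) :=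
      { toFun := fun y => ⟨((y : ↥(LinearMap.range (Q : H →ₗ[ℂ] H))) : H), Submodule.mem_inf.mpr
          ⟨(y : ↥(LinearMap.range (Q : H →ₗ[ℂ] H))).2, LinearMap.mem_ker.mpr (by
            set yb := ((y : ↥(LinearMap.range (Q : H →ₗ[ℂ] H))) : H) with hyb
            have hyo := y.2
            rw [Submodule.mem_orthogonal] at hyo
            have key : ∀ h : H, (inner ℂ h (P yb) : ℂ) = 0 := by
              intro h
              have hmem : T ⟨P h, LinearMap.mem_range_self (P : H →ₗ[ℂ] H) h⟩ ∈ LinearMap.range (T.toLinearMap) :=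
                LinearMap.mem_range_self T.toLinearMap _
              have h0 := hyo _ hmem
              have h0' : (inner ℂ (Q (P h)) yb : ℂ) = 0 := by
                rw [Submodule.coe_inner] at h0
                exact h0
              have hQy : Q yb = yb := hQfix _ (y : ↥(LinearMap.range (Q : H →ₗ[ℂ] H))).2
              calc (inner ℂ h (P yb) : ℂ) = inner ℂ (P h) yb := (hPsym h yb).symm
                _ = inner ℂ (P h) (Q yb) := by rw [hQy]
                _ = inner ℂ (Q (P h)) yb := (hQsym (P h) yb).symm
                _ = 0 := h0'
            exact inner_self_eq_zero.mp (key (P yb)))⟩⟩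
        map_add' := fun x y => rfl
        map_smul' := fun c x => rfl }
    have hinj : Function.Injective f := by
      intro a b hab
      have h2 : ((f a : H)) = ((f b : H)) := congrArg Subtype.val hab
      exact Subtype.ext (Subtype.ext h2)
    exact FiniteDimensional.of_injective f hinj
  have hcompl : IsCompl (LinearMap.range (T.toLinearMap)) ((LinearMap.range (T.toLinearMap))ᗮ) :=
    Submodule.isCompl_orthogonal_of_hasOrthogonalProjection
  have hquot : FiniteDimensional ℂ (↥(LinearMap.range (Q : H →ₗ[ℂ] H)) ⧸ LinearMap.range (T.toLinearMap)) :=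
    (Submodule.quotientEquivOfIsCompl _ _ hcompl).symm.finiteDimensional
  exact ⟨hker, hquot⟩
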